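/- For fixed n, the sequence of polynomials D_{0,n}(q), D_{1,n-1}(q), ..., D_{n,0}(q) is q-unimodal: there is an index m such that the coefficientwise order D_{0,n}(q) <=_q D_{1,n-1}(q) <=_q ... <=_q D_{m,n-m}(q) >=_q ... >=_q D_{n,0}(q) holds. -/

import Mathlib

/-- A lattice path with steps `N = (0,1)`, `E = (1,0)` and the diagonal step `D = (1,1)`. -/
def IsNEDPath (p : List (ℤ × ℤ)) : Prop :=
  ∀ s ∈ p, s = (0, 1) ∨ s = (1, 0) ∨ s = (1, 1)

/-- The coefficient of `q^d` in `D_{i,j}(q)`: the number of NED-paths from the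
origin to `(i,j)` with exactly `d` diagonal steps. -/
noncomputable def Dcoeff (i j d : ℕ) : ℕ :=
  Nat.card {p : List (ℤ × ℤ) //
    IsNEDPath p ∧ p.sum = ((i : ℤ), (j : ℤ)) ∧ p.count (1, 1) = d}

namespace DiagAux

/-- decode a letter into a step -/
def dec : Fin 3 → ℤ × ℤ := ![(0, 1), (1, 0), (1, 1)]

/-- encode a step into a letter -/
def enc : ℤ × ℤ → Fin 3 := fun s => if s = (0, 1) then 0 else if s = (1, 0) then 1 else 2

lemma dec_inj : Function.Injective dec := by decide

/-- words over the alphabet `{0,1,2}` with prescribed letter multiplicities -/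
abbrev L3 (a b d : ℕ) : Type :=
  {l : List (Fin 3) // l.count 0 = a ∧ l.count 1 = b ∧ l.count 2 = d}

lemma count_sum (l : List (Fin 3)) : l.count 0 + l.count 1 + l.count 2 = l.length := by
  induction l with
  | nil => simp
  | cons h t ih => fin_cases h <;> simp [List.count_cons] at * <;> omega

instance L3finite (a b d : ℕ) : Finite (L3 a b d) := by
  have hfin : {l : List (Fin 3) | l.count 0 = a ∧ l.count 1 = b ∧ l.count 2 = d}.Finite := by
    apply (List.finite_length_eq (Fin 3) (a + b + d)).subset
    rintro l ⟨h0, h1, h2⟩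
    simp only [Set.mem_setOf_eq, ← count_sum l, h0, h1, h2]
  exact hfin.to_subtype

lemma nat_card_sigma {ι : Type*} [Fintype ι] {f : ι → Type*} [∀ i, Finite (f i)] :
    Nat.card (Σ i, f i) = ∑ i, Nat.card (f i) := by
  letI : ∀ i, Fintype (f i) := fun i => Fintype.ofFinite _
  simp [Nat.card_eq_fintype_card]

lemma card_L3_zero : Nat.card (L3 0 0 0) = 1 := by
  haveI : Unique (L3 0 0 0) := by
    refine ⟨⟨⟨[], by simp⟩⟩, ?_⟩
    rintro ⟨l, h0, h1, h2⟩
    have hl : l.length = 0 := by rw [← count_sum l, h0, h1, h2]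
    apply Subtype.ext
    simpa using List.length_eq_zero_iff.mp hl
  exact Nat.card_unique

lemma card_cons0 (a b d : ℕ) :
    Nat.card {l : L3 (a + 1) b d // l.1.headI = (0 : Fin 3)} = Nat.card (L3 a b d) := by
  apply Nat.card_congr
  symm
  refine Equiv.ofBijective (fun t => ⟨⟨(0 : Fin 3) :: t.1, ?_, ?_, ?_⟩, rfl⟩) ⟨?_, ?_⟩
  · simp [List.count_cons, t.2.1]
  · simp [List.count_cons, t.2.2.1]
  · simp [List.count_cons, t.2.2.2]
  · intro t t' h
    simp only [Subtype.mk.injEq, List.cons.injEq, true_and] at h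
    exact Subtype.ext (List.cons_injective (congrArg Subtype.val (congrArg Subtype.val h)))
  · rintro ⟨⟨l, h0, h1, h2⟩, hh⟩
    have hne : l ≠ [] := by rintro rfl; simp at h0
    obtain ⟨y, t, rfl⟩ := List.exists_cons_of_ne_nil hne
    rw [List.headI_cons] at hh
    subst hh
    refine ⟨⟨t, ?_, ?_, ?_⟩, ?_⟩
    · simpa [List.count_cons] using h0
    · simpa [List.count_cons] using h1
    · simpa [List.count_cons] using h2
    · rfl

lemma card_cons1 (a b d : ℕ) :
    Nat.card {l : L3 a (b + 1) d // l.1.headI = (1 : Fin 3)} = Nat.card (L3 a b d) := by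
  apply Nat.card_congr
  symm
  refine Equiv.ofBijective (fun t => ⟨⟨(1 : Fin 3) :: t.1, ?_, ?_, ?_⟩, rfl⟩) ⟨?_, ?_⟩
  · simp [List.count_cons, t.2.1]
  · simp [List.count_cons, t.2.2.1]
  · simp [List.count_cons, t.2.2.2]
  · intro t t' h
    simp only [Subtype.mk.injEq, List.cons.injEq, true_and] at h
    exact Subtype.ext (List.cons_injective (congrArg Subtype.val (congrArg Subtype.val h)))
  · rintro ⟨⟨l, h0, h1, h2⟩, hh⟩
    have hne : l ≠ [] := by rintro rfl; simp at h1
    obtain ⟨y, t, rfl⟩ := List.exists_cons_of_ne_nil hne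
    rw [List.headI_cons] at hh
    subst hh
    refine ⟨⟨t, ?_, ?_, ?_⟩, ?_⟩
    · simpa [List.count_cons] using h0
    · simpa [List.count_cons] using h1
    · simpa [List.count_cons] using h2
    · rfl

lemma card_cons2 (a b d : ℕ) :
    Nat.card {l : L3 a b (d + 1) // l.1.headI = (2 : Fin 3)} = Nat.card (L3 a b d) := by
  apply Nat.card_congr
  symm
  refine Equiv.ofBijective (fun t => ⟨⟨(2 : Fin 3) :: t.1, ?_, ?_, ?_⟩, rfl⟩) ⟨?_, ?_⟩
  · simp [List.count_cons, t.2.1]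
  · simp [List.count_cons, t.2.2.1]
  · simp [List.count_cons, t.2.2.2]
  · intro t t' h
    simp only [Subtype.mk.injEq, List.cons.injEq, true_and] at h
    exact Subtype.ext (List.cons_injective (congrArg Subtype.val (congrArg Subtype.val h)))
  · rintro ⟨⟨l, h0, h1, h2⟩, hh⟩
    have hne : l ≠ [] := by rintro rfl; simp at h2
    obtain ⟨y, t, rfl⟩ := List.exists_cons_of_ne_nil hne
    rw [List.headI_cons] at hh
    subst hh
    refine ⟨⟨t, ?_, ?_, ?_⟩, ?_⟩
    · simpa [List.count_cons] using h0
    · simpa [List.count_cons] using h1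
    · simpa [List.count_cons] using h2
    · rfl

lemma card_fiber_zero (a b d : ℕ) (x : Fin 3) (hn : 0 < a + b + d)
    (hx : (x = 0 → a = 0) ∧ (x = 1 → b = 0) ∧ (x = 2 → d = 0)) :
    Nat.card {l : L3 a b d // l.1.headI = x} = 0 := by
  haveI : IsEmpty {l : L3 a b d // l.1.headI = x} := by
    constructor
    rintro ⟨⟨l, h0, h1, h2⟩, hh⟩
    have hne : l ≠ [] := by
      rintro rfl
      simp only [List.count_nil] at h0 h1 h2
      omega
    obtain ⟨y, t, rfl⟩ := List.exists_cons_of_ne_nil hne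
    rw [List.headI_cons] at hh
    subst hh
    fin_cases y <;> simp_all [List.count_cons]
  exact Nat.card_of_isEmpty

lemma card_L3 : ∀ n a b d : ℕ, a + b + d = n →
    Nat.card (L3 a b d) = (a + b + d).choose d * (a + b).choose b := by
  intro n
  induction n with
  | zero =>
    intro a b d h
    obtain ⟨rfl, rfl, rfl⟩ : a = 0 ∧ b = 0 ∧ d = 0 := by omega
    simpa using card_L3_zero
  | succ n ih =>
    intro a b d h
    have hpos : 0 < a + b + d := by omega
    have key : Nat.card (L3 a b d) =
        ∑ x : Fin 3, Nat.card {l : L3 a b d // l.1.headI = x} := by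
      rw [← nat_card_sigma]
      exact (Nat.card_congr (Equiv.sigmaFiberEquiv (fun l : L3 a b d => l.1.headI))).symm
    rw [key, Fin.sum_univ_three]
    rcases a with _ | a <;> rcases b with _ | b <;> rcases d with _ | d
    · omega
    · rw [card_fiber_zero 0 0 (d+1) 0 hpos (by simp),
        card_fiber_zero 0 0 (d+1) 1 hpos (by simp),
        card_cons2 0 0 d, ih 0 0 d (by omega)]
      simp [Nat.choose_self]
    · rw [card_fiber_zero 0 (b+1) 0 0 hpos (by simp),
        card_fiber_zero 0 (b+1) 0 2 hpos (by simp),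
        card_cons1 0 b 0, ih 0 b 0 (by omega)]
      simp [Nat.choose_self, Nat.choose_succ_succ']
    · rw [card_fiber_zero 0 (b+1) (d+1) 0 hpos (by simp),
        card_cons1 0 b (d+1), card_cons2 0 (b+1) d,
        ih 0 b (d+1) (by omega), ih 0 (b+1) d (by omega),
        show 0+b+(d+1) = b+d+1 by ring, show 0+b = b by ring,
        show 0+(b+1)+d = b+d+1 by ring, show 0+(b+1) = b+1 by ring,
        show b+1+(d+1) = b+d+1+1 by ring,
        Nat.choose_succ_succ' (b+d+1) d, Nat.choose_self, Nat.choose_self]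
      ring
    · rw [card_fiber_zero (a+1) 0 0 1 hpos (by simp),
        card_fiber_zero (a+1) 0 0 2 hpos (by simp),
        card_cons0 a 0 0, ih a 0 0 (by omega)]
      simp
    · rw [card_fiber_zero (a+1) 0 (d+1) 1 hpos (by simp),
        card_cons0 a 0 (d+1), card_cons2 (a+1) 0 d,
        ih a 0 (d+1) (by omega), ih (a+1) 0 d (by omega),
        show a+0+(d+1) = a+d+1 by ring, show a+0 = a by ring,
        show (a+1)+0+d = a+d+1 by ring, show (a+1)+0 = a+1 by ring,
        show (a+1)+0+(d+1) = a+d+1+1 by ring,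
        Nat.choose_succ_succ' (a+d+1) d, Nat.choose_zero_right, Nat.choose_zero_right]
      ring
    · rw [card_fiber_zero (a+1) (b+1) 0 2 hpos (by simp),
        card_cons0 a (b+1) 0, card_cons1 (a+1) b 0,
        ih a (b+1) 0 (by omega), ih (a+1) b 0 (by omega),
        show a+(b+1)+0 = a+b+1 by ring, show a+(b+1) = a+b+1 by ring,
        show (a+1)+b+0 = a+b+1 by ring, show (a+1)+b = a+b+1 by ring,
        show (a+1)+(b+1)+0 = a+b+1+1 by ring, show (a+1)+(b+1) = a+b+1+1 by ring,
        Nat.choose_succ_succ' (a+b+1) b, Nat.choose_zero_right, Nat.choose_zero_right]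
      ring
    · rw [card_cons0 a (b+1) (d+1), card_cons1 (a+1) b (d+1), card_cons2 (a+1) (b+1) d,
        ih a (b+1) (d+1) (by omega), ih (a+1) b (d+1) (by omega), ih (a+1) (b+1) d (by omega),
        show a+(b+1)+(d+1) = a+b+d+1+1 by ring, show a+(b+1) = a+b+1 by ring,
        show (a+1)+b+(d+1) = a+b+d+1+1 by ring, show (a+1)+b = a+b+1 by ring,
        show (a+1)+(b+1)+d = a+b+d+1+1 by ring, show (a+1)+(b+1) = a+b+1+1 by ring,
        show a+b+1+1+(d+1) = a+b+d+1+1+1 by ring,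
        Nat.choose_succ_succ' (a+b+d+1+1) d, Nat.choose_succ_succ' (a+b+1) b]
      ring

@[simp] lemma dec_zero : dec 0 = (0, 1) := rfl
@[simp] lemma dec_one : dec 1 = (1, 0) := rfl
@[simp] lemma dec_two : dec 2 = (1, 1) := rfl
@[simp] lemma enc_N : enc (0, 1) = 0 := by norm_num [enc]
@[simp] lemma enc_E : enc (1, 0) = 1 := by norm_num [enc, Prod.ext_iff]
@[simp] lemma enc_D : enc (1, 1) = 2 := by norm_num [enc, Prod.ext_iff]

lemma dec_mem (x : Fin 3) : dec x = (0, 1) ∨ dec x = (1, 0) ∨ dec x = (1, 1) := by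
  fin_cases x <;> simp

lemma sum_map_dec (l : List (Fin 3)) :
    (l.map dec).sum = (((l.count 1 + l.count 2 : ℕ) : ℤ), ((l.count 0 + l.count 2 : ℕ) : ℤ)) := by
  induction l with
  | nil => simp; rfl
  | cons x t ih =>
    fin_cases x <;>
      (simp [List.count_cons, ih, Prod.ext_iff]; push_cast; try omega)

lemma path_counts {p : List (ℤ × ℤ)} (hp : IsNEDPath p) :
    p.sum = (((p.count (1, 0) + p.count (1, 1) : ℕ) : ℤ),
      ((p.count (0, 1) + p.count (1, 1) : ℕ) : ℤ)) := by
  induction p with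
  | nil => simp; rfl
  | cons s t ih =>
    have hs := hp s List.mem_cons_self
    have ht : IsNEDPath t := fun x hx => hp x (List.mem_cons_of_mem s hx)
    rcases hs with rfl | rfl | rfl <;>
      (simp [List.count_cons, ih ht, Prod.ext_iff]; push_cast; omega)

lemma map_enc_dec {p : List (ℤ × ℤ)} (hp : IsNEDPath p) : (p.map enc).map dec = p := by
  induction p with
  | nil => rfl
  | cons s t ih =>
    have hs := hp s List.mem_cons_self
    have ht : IsNEDPath t := fun x hx => hp x (List.mem_cons_of_mem s hx)
    rcases hs with rfl | rfl | rfl <;>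
      simp only [List.map_cons, enc_N, enc_E, enc_D, dec_zero, dec_one, dec_two, ih ht]

lemma count_map_enc {p : List (ℤ × ℤ)} (hp : IsNEDPath p) (x : Fin 3) :
    (p.map enc).count x = p.count (dec x) := by
  induction p with
  | nil => rfl
  | cons s t ih =>
    have hs := hp s List.mem_cons_self
    have ht : IsNEDPath t := fun y hy => hp y (List.mem_cons_of_mem s hy)
    rcases hs with rfl | rfl | rfl <;> fin_cases x <;>
      (simp only [List.map_cons, enc_N, enc_E, enc_D, List.count_cons, ih ht]; simp; try decide)

lemma count_map_dec (l : List (Fin 3)) (x : Fin 3) :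
    (l.map dec).count (dec x) = l.count x := by
  induction l with
  | nil => rfl
  | cons y t ih =>
    fin_cases y <;> fin_cases x <;>
      (simp only [List.map_cons, dec_zero, dec_one, dec_two, List.count_cons, ih]; simp; try decide)

lemma Dcoeff_eq (i j d : ℕ) :
    Dcoeff i j d =
      if d ≤ i ∧ d ≤ j then (i + j - d).choose d * (i + j - 2 * d).choose (i - d) else 0 := by
  classical
  split_ifs with hd
  · obtain ⟨hdi, hdj⟩ := hd
    have hcard : Dcoeff i j d = Nat.card (L3 (j - d) (i - d) d) := by
      apply Nat.card_congr
      symm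
      refine Equiv.ofBijective (fun l => ⟨l.1.map dec, ?_, ?_, ?_⟩) ⟨?_, ?_⟩
      · intro s hs
        rw [List.mem_map] at hs
        obtain ⟨x, -, rfl⟩ := hs
        exact dec_mem x
      · rw [sum_map_dec, l.2.1, l.2.2.1, l.2.2.2, Prod.ext_iff]
        constructor <;> push_cast <;> omega
      · rw [show ((1, 1) : ℤ × ℤ) = dec 2 from rfl, count_map_dec, l.2.2.2]
      · intro l l' h
        simp only [Subtype.mk.injEq] at h
        exact Subtype.ext (List.map_injective_iff.mpr dec_inj h)
      · rintro ⟨p, hp, hsum, hcnt⟩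
        have hps := path_counts hp
        rw [hsum] at hps
        rw [Prod.mk.injEq] at hps
        obtain ⟨h1, h2⟩ := hps
        have h1' : i = p.count (1, 0) + p.count (1, 1) := by exact_mod_cast h1
        have h2' : j = p.count (0, 1) + p.count (1, 1) := by exact_mod_cast h2
        refine ⟨⟨p.map enc, ?_, ?_, ?_⟩, ?_⟩
        · rw [count_map_enc hp 0]; show p.count (0, 1) = j - d; omega
        · rw [count_map_enc hp 1]; show p.count (1, 0) = i - d; omega
        · rw [count_map_enc hp 2]; exact hcnt
        · exact Subtype.ext (map_enc_dec hp)
    rw [hcard, card_L3 (j - d + (i - d) + d) (j - d) (i - d) d rfl,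
      show j - d + (i - d) + d = i + j - d by omega,
      show j - d + (i - d) = i + j - 2 * d by omega]
  · have hemp : IsEmpty {p : List (ℤ × ℤ) //
        IsNEDPath p ∧ p.sum = ((i : ℤ), (j : ℤ)) ∧ p.count (1, 1) = d} := by
      constructor
      rintro ⟨p, hp, hsum, hcnt⟩
      have hps := path_counts hp
      rw [hsum, Prod.mk.injEq] at hps
      obtain ⟨h1, h2⟩ := hps
      have h1' : i = p.count (1, 0) + p.count (1, 1) := by exact_mod_cast h1
      have h2' : j = p.count (0, 1) + p.count (1, 1) := by exact_mod_cast h2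
      exact hd ⟨by omega, by omega⟩
    exact Nat.card_of_isEmpty

lemma choose_succ_le {N r : ℕ} (h : N ≤ 2 * r + 1) : N.choose (r + 1) ≤ N.choose r := by
  rcases le_or_gt (r + 1) N with hle | hlt
  · have h1 : N.choose (N - (r + 1)) = N.choose (r + 1) := Nat.choose_symm hle
    have h2 : N.choose (N - r) = N.choose r := Nat.choose_symm (by omega)
    have h3 : N - r = (N - (r + 1)) + 1 := by omega
    rw [← h1, ← h2, h3]
    rcases lt_or_ge (N - (r + 1)) (N / 2) with hh | hh
    · exact Nat.choose_le_succ_of_lt_half_left hh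
    · set s := N - (r + 1) with hs
      have hN : N = 2 * s + 1 := by omega
      rw [hN]
      exact (Nat.choose_symm_half s).ge
  · rw [Nat.choose_eq_zero_of_lt hlt]
    exact Nat.zero_le _

end DiagAux


theorem diag_path_q_unimodal (n : ℕ) :
    ∃ m : ℕ, m ≤ n ∧
      (∀ k, k < m → ∀ d, Dcoeff k (n - k) d ≤ Dcoeff (k + 1) (n - (k + 1)) d) ∧
      (∀ k, m ≤ k → k < n → ∀ d, Dcoeff (k + 1) (n - (k + 1)) d ≤ Dcoeff k (n - k) d) := by
  refine ⟨n / 2, Nat.div_le_self n 2, ?_, ?_⟩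
  · intro k hk d
    rw [DiagAux.Dcoeff_eq, DiagAux.Dcoeff_eq]
    by_cases h1 : d ≤ k ∧ d ≤ n - k
    · have h2 : d ≤ k + 1 ∧ d ≤ n - (k + 1) := by omega
      rw [if_pos h1, if_pos h2,
        show k + (n - k) - d = n - d by omega,
        show k + (n - k) - 2 * d = n - 2 * d by omega,
        show k + 1 + (n - (k + 1)) - d = n - d by omega,
        show k + 1 + (n - (k + 1)) - 2 * d = n - 2 * d by omega,
        show k + 1 - d = (k - d) + 1 by omega]
      exact Nat.mul_le_mul_left _
        (Nat.choose_le_succ_of_lt_half_left (by omega))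
    · rw [if_neg h1]
      exact Nat.zero_le _
  · intro k hk hkn d
    rw [DiagAux.Dcoeff_eq, DiagAux.Dcoeff_eq]
    by_cases h2 : d ≤ k + 1 ∧ d ≤ n - (k + 1)
    · have h1 : d ≤ k ∧ d ≤ n - k := by omega
      rw [if_pos h1, if_pos h2,
        show k + (n - k) - d = n - d by omega,
        show k + (n - k) - 2 * d = n - 2 * d by omega,
        show k + 1 + (n - (k + 1)) - d = n - d by omega,
        show k + 1 + (n - (k + 1)) - 2 * d = n - 2 * d by omega,
        show k + 1 - d = (k - d) + 1 by omega]
      exact Nat.mul_le_mul_left _ (DiagAux.choose_succ_le (by omega))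
    · rw [if_neg h2]
      exact Nat.zero_le _
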